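/- Let D = (V, A) be a finite digraph, let k ≥ 1 and w ≥ 1 be integers, and let X ⊆ V be a set whose deletion leaves an acyclic digraph each of whose weakly connected components has at most w vertices. Call two weak components C, C' of D − X equivalent if there is a digraph isomorphism from C to C' such that each vertex and its image have the same set of in-neighbors in X and the same set of out-neighbors in X. Let D' be an induced subdigraph of D obtained by keeping X together with, for each equivalence class, all of its components if the class has at most kw + 1 components, and exactly kw + 1 of its components otherwise. Then cn(D) ≤ k if and only if cn(D') ≤ k. -/

import Mathlib

open scoped Classical

/-- The robber territories for the subdigraph of `D` induced by a vertex set `S`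
(0-indexed: `terrOn A S W i` is the paper's `R_{i+1}` of the game on `D[S]`). -/
noncomputable def terrOn {V : Type} [Fintype V] [DecidableEq V]
    (A : V → V → Prop) (S : Finset V) (W : ℕ → Finset V) : ℕ → Finset V
  | 0 => S \ W 0
  | i + 1 => (S.filter (fun y => ∃ x ∈ terrOn A S W i, A x y)) \ W (i + 1)

/-- A cop strategy uses at most `k` cops. -/
def UsesAtMost {V : Type} (W : ℕ → Finset V) (k : ℕ) : Prop :=
  ∀ i, (W i).card ≤ k

/-- The cop number of the subdigraph of `D` induced by the vertex set `S`. -/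
noncomputable def copNumberOn {V : Type} [Fintype V] [DecidableEq V]
    (A : V → V → Prop) (S : Finset V) : ℕ :=
  sInf {k | ∃ W : ℕ → Finset V, UsesAtMost W k ∧ ∃ t, terrOn A S W t = ∅}

/-- The subdigraph induced by `S` is acyclic (loops count as cycles): no vertex of
`S` lies on a directed cycle inside `S`. -/
def AcyclicOn {V : Type} (A : V → V → Prop) (S : Finset V) : Prop :=
  ∀ v ∈ S, ¬ Relation.TransGen (fun x y => x ∈ S ∧ y ∈ S ∧ A x y) v v

/-- The weakly connected component of `v` in the subdigraph induced by `S`. -/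
noncomputable def weakComponent {V : Type} [Fintype V] [DecidableEq V]
    (A : V → V → Prop) (S : Finset V) (v : V) : Finset V :=
  S.filter (fun u => Relation.ReflTransGen (fun x y => x ∈ S ∧ y ∈ S ∧ (A x y ∨ A y x)) v u)

/-- Two components `C`, `C'` (subsets of `V \ X`) are equivalent: there is a digraph
isomorphism from `C` onto `C'` such that each vertex and its image have the same
in-neighbors and the same out-neighbors in `X`. -/
def ComponentEquiv {V : Type} [DecidableEq V] (A : V → V → Prop) (X : Finset V)
    (C C' : Finset V) : Prop :=
  ∃ φ : V → V, Set.InjOn φ ↑C ∧ C.image φ = C' ∧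
    (∀ u ∈ C, ∀ v ∈ C, (A u v ↔ A (φ u) (φ v))) ∧
    (∀ u ∈ C, ∀ x ∈ X, (A x u ↔ A x (φ u)) ∧ (A u x ↔ A (φ u) x))
section KernelAux
variable {V : Type} [Fintype V] [DecidableEq V]

lemma terrOn_zero (A : V → V → Prop) (S : Finset V) (W : ℕ → Finset V) :
    terrOn A S W 0 = S \ W 0 := by
  rw [terrOn]

lemma terrOn_succ (A : V → V → Prop) (S : Finset V) (W : ℕ → Finset V) (i : ℕ) :
    terrOn A S W (i + 1) =
      (S.filter (fun y => ∃ x ∈ terrOn A S W i, A x y)) \ W (i + 1) := by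
  rw [terrOn]

lemma terrOn_subset (A : V → V → Prop) (S : Finset V) (W : ℕ → Finset V) (i : ℕ) :
    terrOn A S W i ⊆ S := by
  cases i with
  | zero => rw [terrOn_zero]; exact (Finset.sdiff_subset).trans (le_refl S)
  | succ n => rw [terrOn_succ]; exact Finset.sdiff_subset.trans (Finset.filter_subset _ _)

lemma terrOn_mono (A : V → V → Prop) {S T : Finset V} (h : S ⊆ T) (W : ℕ → Finset V) :
    ∀ i, terrOn A S W i ⊆ terrOn A T W i := by
  intro i
  induction i with
  | zero =>
      rw [terrOn_zero, terrOn_zero]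
      exact Finset.sdiff_subset_sdiff h le_rfl
  | succ n ih =>
      rw [terrOn_succ, terrOn_succ]
      refine Finset.sdiff_subset_sdiff ?_ le_rfl
      intro y hy
      simp only [Finset.mem_filter] at hy ⊢
      obtain ⟨hyS, x, hx, hA⟩ := hy
      exact ⟨h hyS, x, ih hx, hA⟩

lemma copNumberOn_le_iff (A : V → V → Prop) (S : Finset V) (k : ℕ) :
    copNumberOn A S ≤ k ↔
      ∃ W : ℕ → Finset V, UsesAtMost W k ∧ ∃ t, terrOn A S W t = ∅ := by
  constructor
  · intro h
    have hne : {m | ∃ W : ℕ → Finset V, UsesAtMost W m ∧ ∃ t, terrOn A S W t = ∅}.Nonempty := by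
      refine ⟨(Finset.univ : Finset V).card, fun _ => Finset.univ, fun i => le_rfl, 0, ?_⟩
      rw [terrOn_zero]
      simp
    obtain ⟨W, hW, t, ht⟩ := Nat.sInf_mem hne
    exact ⟨W, fun i => le_trans (hW i) h, t, ht⟩
  · rintro ⟨W, hW, t, ht⟩
    exact Nat.sInf_le ⟨W, hW, t, ht⟩

omit [Fintype V] [DecidableEq V] in
lemma rtg_symm {r : V → V → Prop} (hr : ∀ a b, r a b → r b a) {a b : V}
    (h : Relation.ReflTransGen r a b) : Relation.ReflTransGen r b a := by
  induction h with
  | refl => exact Relation.ReflTransGen.refl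
  | tail _ hbc ih =>
      exact Relation.ReflTransGen.trans (Relation.ReflTransGen.single (hr _ _ hbc)) ih

lemma mem_weakComponent_self (A : V → V → Prop) (S : Finset V) {v : V} (hv : v ∈ S) :
    v ∈ weakComponent A S v := by
  simp only [weakComponent, Finset.mem_filter]
  exact ⟨hv, Relation.ReflTransGen.refl⟩

lemma weakComponent_subset (A : V → V → Prop) (S : Finset V) (v : V) :
    weakComponent A S v ⊆ S := Finset.filter_subset _ _

lemma weakComponent_eq_of_mem (A : V → V → Prop) (S : Finset V) {u v : V}
    (h : u ∈ weakComponent A S v) : weakComponent A S u = weakComponent A S v := by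
  have hsymm : ∀ a b : V, (a ∈ S ∧ b ∈ S ∧ (A a b ∨ A b a)) →
      (b ∈ S ∧ a ∈ S ∧ (A b a ∨ A a b)) := by
    rintro a b ⟨ha, hb, hab⟩; exact ⟨hb, ha, hab.symm⟩
  simp only [weakComponent, Finset.mem_filter] at h
  obtain ⟨hu, hvu⟩ := h
  ext x
  simp only [weakComponent, Finset.mem_filter]
  constructor
  · rintro ⟨hx, hux⟩; exact ⟨hx, hvu.trans hux⟩
  · rintro ⟨hx, hvx⟩; exact ⟨hx, (rtg_symm hsymm hvu).trans hvx⟩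

lemma weakComponent_eq_of_arc (A : V → V → Prop) (S : Finset V) {u v : V}
    (hu : u ∈ S) (hv : v ∈ S) (h : A u v) :
    weakComponent A S u = weakComponent A S v := by
  apply weakComponent_eq_of_mem
  simp only [weakComponent, Finset.mem_filter]
  exact ⟨hu, Relation.ReflTransGen.single ⟨hv, hu, Or.inr h⟩⟩

/-- The set of vertices reachable from `v` inside `S` along arcs of `A`. -/
noncomputable def reachSet (A : V → V → Prop) (S : Finset V) (v : V) : Finset V :=
  Finset.univ.filter (fun u => Relation.ReflTransGen
    (fun x y => x ∈ S ∧ y ∈ S ∧ A x y) v u)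

lemma one_le_reach (A : V → V → Prop) (S : Finset V) (v : V) :
    1 ≤ (reachSet A S v).card := by
  refine Finset.card_pos.mpr ⟨v, ?_⟩
  simp only [reachSet, Finset.mem_filter, Finset.mem_univ, true_and]
  exact Relation.ReflTransGen.refl

lemma reach_lt_of_arc (A : V → V → Prop) (S : Finset V)
    (hacyc : AcyclicOn A S) {u v : V} (hu : u ∈ S) (hv : v ∈ S) (h : A u v) :
    (reachSet A S v).card < (reachSet A S u).card := by
  apply Finset.card_lt_card
  constructor
  · intro x hx
    simp only [reachSet, Finset.mem_filter, Finset.mem_univ, true_and] at hx ⊢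
    exact Relation.ReflTransGen.head ⟨hu, hv, h⟩ hx
  · intro hsub
    have hu' : u ∈ reachSet A S u := by
      simp only [reachSet, Finset.mem_filter, Finset.mem_univ, true_and]
      exact Relation.ReflTransGen.refl
    have := hsub hu'
    simp only [reachSet, Finset.mem_filter, Finset.mem_univ, true_and] at this
    exact hacyc u hu (Relation.TransGen.head' ⟨hu, hv, h⟩ this)

lemma reach_subset_weakComponent (A : V → V → Prop) (S : Finset V) {v : V} (hv : v ∈ S) :
    reachSet A S v ⊆ weakComponent A S v := by
  intro x hx
  simp only [reachSet, Finset.mem_filter, Finset.mem_univ, true_and] at hx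
  simp only [weakComponent, Finset.mem_filter]
  constructor
  · induction hx with
    | refl => exact hv
    | tail _ hbc _ => exact hbc.2.1
  · exact Relation.ReflTransGen.mono (r := fun x y => x ∈ S ∧ y ∈ S ∧ A x y)
      (fun x y (h : x ∈ S ∧ y ∈ S ∧ A x y) =>
        (⟨h.1, h.2.1, Or.inl h.2.2⟩ : x ∈ S ∧ y ∈ S ∧ (A x y ∨ A y x))) _ _ hx

lemma exists_clean (W : ℕ → Finset V) (k w a m : ℕ) (hm : m ≤ w)
    (hk : ∀ i, (W i).card ≤ k)
    (F : Finset (Finset V)) (hcard : F.card = k * w + 1)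
    (hdisj : ∀ C1 ∈ F, ∀ C2 ∈ F, ∀ x : V, x ∈ C1 → x ∈ C2 → C1 = C2) :
    ∃ C' ∈ F, ∀ j, a ≤ j → j < a + m → ∀ x ∈ W j, x ∉ C' := by
  by_contra hcon
  push_neg at hcon
  have h2 : ∀ C' ∈ F, ∃ x, x ∈ (Finset.Ico a (a + m)).biUnion W ∧ x ∈ C' := by
    intro C' hC'
    obtain ⟨j, hj1, hj2, x, hxW, hxC⟩ := hcon C' hC'
    exact ⟨x, Finset.mem_biUnion.mpr ⟨j, Finset.mem_Ico.mpr ⟨hj1, hj2⟩, hxW⟩, hxC⟩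
  have hFne : F.Nonempty := Finset.card_pos.mp (by omega)
  obtain ⟨C0, hC0⟩ := hFne
  obtain ⟨x0, _, _⟩ := h2 C0 hC0
  set f : Finset V → V := fun C' => if h : C' ∈ F then (h2 C' h).choose else x0 with hf
  have hfm : ∀ C' ∈ F, f C' ∈ (Finset.Ico a (a + m)).biUnion W := by
    intro C' hC'
    simp only [hf, dif_pos hC']
    exact ((h2 C' hC').choose_spec).1
  have hfc : ∀ C' ∈ F, f C' ∈ C' := by
    intro C' hC'
    simp only [hf, dif_pos hC']
    exact ((h2 C' hC').choose_spec).2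
  have hinj : Set.InjOn f ↑F := by
    intro C1 hC1 C2 hC2 heq
    exact hdisj C1 hC1 C2 hC2 (f C1) (hfc C1 hC1) (heq ▸ hfc C2 hC2)
  have hle : F.card ≤ ((Finset.Ico a (a + m)).biUnion W).card :=
    Finset.card_le_card_of_injOn f hfm hinj
  have hb : ((Finset.Ico a (a + m)).biUnion W).card ≤ m * k := by
    calc ((Finset.Ico a (a + m)).biUnion W).card
        ≤ ∑ j ∈ Finset.Ico a (a + m), (W j).card := Finset.card_biUnion_le
      _ ≤ ∑ _j ∈ Finset.Ico a (a + m), k := Finset.sum_le_sum (fun j _ => hk j)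
      _ = m * k := by simp [Nat.Ico_eq_range', mul_comm]
  have h4 : m * k ≤ w * k := Nat.mul_le_mul_right k hm
  have h5 : k * w + 1 ≤ w * k := by omega
  rw [mul_comm] at h5
  omega

end KernelAux
/-- Kernelization: let `X` be a set whose deletion leaves an acyclic digraph whose
weak components have at most `w` vertices, and let `D'` be the subdigraph induced by
`X` together with a choice `Keep` of components containing, from each equivalence
class, all its components if the class has at most `kw+1` elements and exactly
`kw + 1` of them otherwise.  Then `cn(D) ≤ k` iff `cn(D') ≤ k`. -/
theorem copNumber_le_iff_kernel {V : Type} [Fintype V] [DecidableEq V]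
    (A : V → V → Prop) (k w : ℕ) (hk : 1 ≤ k) (hw : 1 ≤ w) (X : Finset V)
    (hacyc : AcyclicOn A (Finset.univ \ X))
    (hsize : ∀ v ∈ Finset.univ \ X, (weakComponent A (Finset.univ \ X) v).card ≤ w)
    (Keep : Finset (Finset V))
    (hKeepSub : Keep ⊆ (Finset.univ \ X).image (weakComponent A (Finset.univ \ X)))
    (hcount : ∀ C ∈ (Finset.univ \ X).image (weakComponent A (Finset.univ \ X)),
      (Keep.filter (fun C' => ComponentEquiv A X C C')).card =
        min ((((Finset.univ \ X).image (weakComponent A (Finset.univ \ X))).filter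
              (fun C' => ComponentEquiv A X C C')).card)
            (k * w + 1)) :
    copNumberOn A Finset.univ ≤ k ↔ copNumberOn A (X ∪ Keep.biUnion id) ≤ k := by
  rw [copNumberOn_le_iff, copNumberOn_le_iff]
  constructor
  · rintro ⟨W, hWk, t, ht⟩
    refine ⟨W, hWk, t, ?_⟩
    have hmono := terrOn_mono A (Finset.subset_univ (X ∪ Keep.biUnion id)) W t
    rw [ht] at hmono
    exact Finset.subset_empty.mp hmono
  · rintro ⟨W, hWk, T, hT⟩
    refine ⟨W, hWk, T, ?_⟩
    -- abbreviations (plain terms, no `set` to avoid defeq issues)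
    have hmemS0 : ∀ v : V, v ∉ X → v ∈ Finset.univ \ X := by
      intro v h
      exact Finset.mem_sdiff.mpr ⟨Finset.mem_univ v, h⟩
    have hXS' : X ⊆ X ∪ Keep.biUnion id := Finset.subset_union_left
    have hKeepS' : ∀ K ∈ Keep, K ⊆ X ∪ Keep.biUnion id := by
      intro K hK x hx
      exact Finset.mem_union_right _ (Finset.mem_biUnion.mpr ⟨K, hK, hx⟩)
    have hKeepComp : ∀ K ∈ Keep, ∃ u, u ∈ Finset.univ \ X ∧
        K = weakComponent A (Finset.univ \ X) u := by
      intro K hK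
      obtain ⟨u, hu, huK⟩ := Finset.mem_image.mp (hKeepSub hK)
      exact ⟨u, hu, huK.symm⟩
    have hcompKeep : ∀ y : V, y ∈ Keep.biUnion id →
        weakComponent A (Finset.univ \ X) y ∈ Keep := by
      intro y hy
      obtain ⟨K, hK, hyK⟩ := Finset.mem_biUnion.mp hy
      obtain ⟨u, hu, rfl⟩ := hKeepComp K hK
      rw [weakComponent_eq_of_mem A (Finset.univ \ X) hyK]
      exact hK
    have hdisjK : ∀ C1 ∈ Keep, ∀ C2 ∈ Keep, ∀ x : V, x ∈ C1 → x ∈ C2 → C1 = C2 := by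
      intro C1 h1 C2 h2 x hx1 hx2
      obtain ⟨u1, _, rfl⟩ := hKeepComp C1 h1
      obtain ⟨u2, _, rfl⟩ := hKeepComp C2 h2
      rw [← weakComponent_eq_of_mem A (Finset.univ \ X) hx1,
        ← weakComponent_eq_of_mem A (Finset.univ \ X) hx2]
    have hequiv_refl : ∀ C : Finset V, ComponentEquiv A X C C := by
      intro C
      exact ⟨id, Set.injOn_id _, Finset.image_id, by simp, by simp⟩
    -- class-counting: the equivalence class of a discarded component keeps k*w+1 members
    have hclass : ∀ v : V, v ∉ X ∪ Keep.biUnion id →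
        (Keep.filter (fun C' =>
          ComponentEquiv A X (weakComponent A (Finset.univ \ X) v) C')).card = k * w + 1 := by
      intro v hv
      have hvX : v ∉ X := fun h => hv (hXS' h)
      have hvS0 : v ∈ Finset.univ \ X := hmemS0 v hvX
      have hCI : weakComponent A (Finset.univ \ X) v ∈
          (Finset.univ \ X).image (weakComponent A (Finset.univ \ X)) :=
        Finset.mem_image.mpr ⟨v, hvS0, rfl⟩
      have hcnt := hcount _ hCI
      have hsub : (Keep.filter (fun C' =>
            ComponentEquiv A X (weakComponent A (Finset.univ \ X) v) C')) ⊆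
          (((Finset.univ \ X).image (weakComponent A (Finset.univ \ X))).filter
            (fun C' => ComponentEquiv A X (weakComponent A (Finset.univ \ X) v) C')) :=
        Finset.filter_subset_filter _ hKeepSub
      have hCIF : weakComponent A (Finset.univ \ X) v ∈
          (((Finset.univ \ X).image (weakComponent A (Finset.univ \ X))).filter
            (fun C' => ComponentEquiv A X (weakComponent A (Finset.univ \ X) v) C')) :=
        Finset.mem_filter.mpr ⟨hCI, hequiv_refl _⟩
      have hKnotin : weakComponent A (Finset.univ \ X) v ∉ Keep := by
        intro hmem
        exact hv (hKeepS' _ hmem (mem_weakComponent_self A (Finset.univ \ X) hvS0))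
      by_cases hle : (((Finset.univ \ X).image (weakComponent A (Finset.univ \ X))).filter
            (fun C' => ComponentEquiv A X (weakComponent A (Finset.univ \ X) v) C')).card
          ≤ k * w + 1
      · exfalso
        have hEq : (Keep.filter (fun C' =>
              ComponentEquiv A X (weakComponent A (Finset.univ \ X) v) C')).card =
            (((Finset.univ \ X).image (weakComponent A (Finset.univ \ X))).filter
              (fun C' => ComponentEquiv A X (weakComponent A (Finset.univ \ X) v) C')).card := by
          rw [hcnt]
          exact min_eq_left hle
        have hsetEq := Finset.eq_of_subset_of_card_le hsub (ge_of_eq hEq)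
        have : weakComponent A (Finset.univ \ X) v ∈ Keep.filter (fun C' =>
            ComponentEquiv A X (weakComponent A (Finset.univ \ X) v) C') := by
          rw [hsetEq]; exact hCIF
        exact hKnotin (Finset.mem_filter.mp this).1
      · rw [hcnt]
        exact min_eq_right (by omega)
    -- select a clean equivalent kept component for a window of length H v starting at a
    have hselect : ∀ v : V, v ∉ X ∪ Keep.biUnion id → v ∉ X → ∀ a : ℕ,
        ∃ C' ∈ Keep, ComponentEquiv A X (weakComponent A (Finset.univ \ X) v) C' ∧
          ∀ j, a ≤ j → j < a + (reachSet A (Finset.univ \ X) v).card →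
            ∀ x ∈ W j, x ∉ C' := by
      intro v hv hvX a
      have hHw : (reachSet A (Finset.univ \ X) v).card ≤ w :=
        le_trans (Finset.card_le_card
          (reach_subset_weakComponent A (Finset.univ \ X) (hmemS0 v hvX)))
          (hsize v (hmemS0 v hvX))
      have hdisj' : ∀ C1 ∈ Keep.filter (fun C' =>
            ComponentEquiv A X (weakComponent A (Finset.univ \ X) v) C'),
          ∀ C2 ∈ Keep.filter (fun C' =>
            ComponentEquiv A X (weakComponent A (Finset.univ \ X) v) C'),
          ∀ x : V, x ∈ C1 → x ∈ C2 → C1 = C2 := by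
        intro C1 h1 C2 h2 x hx1 hx2
        exact hdisjK C1 (Finset.mem_filter.mp h1).1 C2 (Finset.mem_filter.mp h2).1 x hx1 hx2
      obtain ⟨C', hC'F, hclean⟩ := exists_clean W k w a _ hHw hWk _ (hclass v hv) hdisj'
      exact ⟨C', (Finset.mem_filter.mp hC'F).1, (Finset.mem_filter.mp hC'F).2, hclean⟩
    -- the simulation invariant
    have key : ∀ i, ∀ v ∈ terrOn A Finset.univ W i,
        (v ∈ X ∪ Keep.biUnion id → v ∈ terrOn A (X ∪ Keep.biUnion id) W i) ∧
        (v ∉ X ∪ Keep.biUnion id → ∃ C' ∈ Keep, ∃ φ : V → V,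
          (∀ a ∈ weakComponent A (Finset.univ \ X) v,
            ∀ b ∈ weakComponent A (Finset.univ \ X) v, (A a b ↔ A (φ a) (φ b))) ∧
          (∀ a ∈ weakComponent A (Finset.univ \ X) v, ∀ x ∈ X,
            (A x a ↔ A x (φ a)) ∧ (A a x ↔ A (φ a) x)) ∧
          (weakComponent A (Finset.univ \ X) v).image φ = C' ∧
          φ v ∈ terrOn A (X ∪ Keep.biUnion id) W i ∧
          (∀ j, i ≤ j → j < i + (reachSet A (Finset.univ \ X) v).card →
            ∀ x ∈ W j, x ∉ C')) := by
      intro i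
      induction i with
      | zero =>
        intro v hv
        rw [terrOn_zero] at hv
        have hvW : v ∉ W 0 := (Finset.mem_sdiff.mp hv).2
        constructor
        · intro hvS'
          rw [terrOn_zero]
          exact Finset.mem_sdiff.mpr ⟨hvS', hvW⟩
        · intro hvS'
          have hvX : v ∉ X := fun h => hvS' (hXS' h)
          obtain ⟨C', hC'K, ⟨φ, hinj, himg, harc, hXn⟩, hclean⟩ := hselect v hvS' hvX 0
          have h1v := one_le_reach A (Finset.univ \ X) v
          have hφv : φ v ∈ C' := himg ▸ Finset.mem_image_of_mem φ
            (mem_weakComponent_self A (Finset.univ \ X) (hmemS0 v hvX))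
          refine ⟨C', hC'K, φ, harc, hXn, himg, ?_, fun j hj1 hj2 => hclean j hj1 hj2⟩
          rw [terrOn_zero]
          refine Finset.mem_sdiff.mpr ⟨hKeepS' _ hC'K hφv, ?_⟩
          intro hmem
          exact hclean 0 le_rfl (by omega) (φ v) hmem hφv
      | succ n ih =>
        intro v hv
        rw [terrOn_succ] at hv
        obtain ⟨hvfilter, hvW⟩ := Finset.mem_sdiff.mp hv
        obtain ⟨-, u, hu, hAuv⟩ := Finset.mem_filter.mp hvfilter
        have ihu := ih u hu
        constructor
        · intro hvS'
          rw [terrOn_succ]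
          refine Finset.mem_sdiff.mpr ⟨Finset.mem_filter.mpr ⟨hvS', ?_⟩, hvW⟩
          by_cases huS' : u ∈ X ∪ Keep.biUnion id
          · exact ⟨u, ihu.1 huS', hAuv⟩
          · -- u is in a discarded component, so v must be in X
            have huX : u ∉ X := fun h => huS' (hXS' h)
            obtain ⟨C', hC'K, φ, harc, hXn, himg, hφu, hclean⟩ := ihu.2 huS'
            have hvX : v ∈ X := by
              by_contra hvX
              have hcomp : weakComponent A (Finset.univ \ X) u =
                  weakComponent A (Finset.univ \ X) v :=
                weakComponent_eq_of_arc A (Finset.univ \ X) (hmemS0 u huX) (hmemS0 v hvX) hAuv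
              have hvB : v ∈ Keep.biUnion id := by
                rcases Finset.mem_union.mp hvS' with h | h
                · exact absurd h hvX
                · exact h
              have hKc := hcompKeep v hvB
              apply huS'
              apply hKeepS' _ hKc
              rw [← hcomp]
              exact mem_weakComponent_self A (Finset.univ \ X) (hmemS0 u huX)
            refine ⟨φ u, hφu, ?_⟩
            exact ((hXn u (mem_weakComponent_self A (Finset.univ \ X) (hmemS0 u huX))
              v hvX).2).mp hAuv
        · intro hvS'
          have hvX : v ∉ X := fun h => hvS' (hXS' h)
          have hvwc : v ∈ weakComponent A (Finset.univ \ X) v :=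
            mem_weakComponent_self A (Finset.univ \ X) (hmemS0 v hvX)
          have h1v := one_le_reach A (Finset.univ \ X) v
          by_cases huS' : u ∈ X ∪ Keep.biUnion id
          · -- entry from X
            have huX : u ∈ X := by
              by_contra huX
              have huB : u ∈ Keep.biUnion id := by
                rcases Finset.mem_union.mp huS' with h | h
                · exact absurd h huX
                · exact h
              have hKc := hcompKeep u huB
              have hcomp : weakComponent A (Finset.univ \ X) u =
                  weakComponent A (Finset.univ \ X) v :=
                weakComponent_eq_of_arc A (Finset.univ \ X) (hmemS0 u huX) (hmemS0 v hvX) hAuv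
              apply hvS'
              apply hKeepS' _ hKc
              rw [hcomp]
              exact hvwc
            obtain ⟨C', hC'K, ⟨φ, hinj, himg, harc, hXn⟩, hclean⟩ := hselect v hvS' hvX (n + 1)
            have hφv : φ v ∈ C' := himg ▸ Finset.mem_image_of_mem φ hvwc
            refine ⟨C', hC'K, φ, harc, hXn, himg, ?_, fun j hj1 hj2 => hclean j hj1 hj2⟩
            rw [terrOn_succ]
            refine Finset.mem_sdiff.mpr ⟨Finset.mem_filter.mpr
              ⟨hKeepS' _ hC'K hφv, ⟨u, ihu.1 (hXS' huX), ?_⟩⟩, ?_⟩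
            · exact ((hXn v hvwc u huX).1).mp hAuv
            · intro hmem
              exact hclean (n + 1) le_rfl (by omega) (φ v) hmem hφv
          · -- both u and v in the same discarded component
            have huX : u ∉ X := fun h => huS' (hXS' h)
            have hcomp : weakComponent A (Finset.univ \ X) u =
                weakComponent A (Finset.univ \ X) v :=
              weakComponent_eq_of_arc A (Finset.univ \ X) (hmemS0 u huX) (hmemS0 v hvX) hAuv
            obtain ⟨C', hC'K, φ, harc, hXn, himg, hφu, hclean⟩ := ihu.2 huS'
            rw [hcomp] at harc hXn himg
            have hHlt : (reachSet A (Finset.univ \ X) v).card <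
                (reachSet A (Finset.univ \ X) u).card :=
              reach_lt_of_arc A (Finset.univ \ X) hacyc (hmemS0 u huX) (hmemS0 v hvX) hAuv
            have huwc : u ∈ weakComponent A (Finset.univ \ X) v := by
              rw [← hcomp]
              exact mem_weakComponent_self A (Finset.univ \ X) (hmemS0 u huX)
            have hφv : φ v ∈ C' := himg ▸ Finset.mem_image_of_mem φ hvwc
            refine ⟨C', hC'K, φ, harc, hXn, himg, ?_,
              fun j hj1 hj2 => hclean j (by omega) (by omega)⟩
            rw [terrOn_succ]
            refine Finset.mem_sdiff.mpr ⟨Finset.mem_filter.mpr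
              ⟨hKeepS' _ hC'K hφv, ⟨φ u, hφu, (harc u huwc v hvwc).mp hAuv⟩⟩, ?_⟩
            intro hmem
            exact hclean (n + 1) (by omega) (by omega) (φ v) hmem hφv
    -- conclude
    rw [Finset.eq_empty_iff_forall_notMem]
    intro v hv
    have hkey := key T v hv
    by_cases hvS' : v ∈ X ∪ Keep.biUnion id
    · have h1 := hkey.1 hvS'
      rw [hT] at h1
      exact Finset.notMem_empty _ h1
    · obtain ⟨C', -, φ, -, -, -, hφv, -⟩ := hkey.2 hvS'
      rw [hT] at hφv
      exact Finset.notMem_empty _ hφv
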